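/- For every shape ξ>0, scale β>0 and every k>0, let m = β(2^ξ − 1)/ξ be the median of GPD(ξ,β) and extend its c.d.f. by F_{ξ,β}(x) = 0 for x < 0. Then there exists a unique M > 0 such that F_{ξ,β}(m + kM) − F_{ξ,β}(m − M) = 1/2; i.e., the population kMAD of GPD(ξ,β) is well defined as the unique root of this equation. -/

import Mathlib

open Real

/-- C.d.f. of the generalized Pareto distribution GPD(ξ,β), threshold μ = 0,
extended by 0 for x < 0. -/
noncomputable def gpdCDF (ξ β x : ℝ) : ℝ :=
  if x < 0 then 0 else 1 - (1 + ξ * x / β) ^ (-1 / ξ)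

/-- For every ξ>0, β>0 and k>0, with m = β(2^ξ−1)/ξ the median of GPD(ξ,β), there is a
unique M>0 with F(m+kM) − F(m−M) = 1/2: the population kMAD is well defined. -/
theorem gpd_kMAD_exists_unique (ξ β k : ℝ) (hξ : 0 < ξ) (hβ : 0 < β) (hk : 0 < k) :
    ∃! M : ℝ, 0 < M ∧
      gpdCDF ξ β (β * ((2 : ℝ) ^ ξ - 1) / ξ + k * M)
        - gpdCDF ξ β (β * ((2 : ℝ) ^ ξ - 1) / ξ - M) = 1 / 2 := by
  set m : ℝ := β * ((2 : ℝ) ^ ξ - 1) / ξ with hm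
  have h2 : (1 : ℝ) < (2 : ℝ) ^ ξ :=
    (Real.one_lt_rpow_iff_of_pos (by norm_num : (0:ℝ) < 2)).2 (Or.inl ⟨by norm_num, hξ⟩)
  have hmpos : 0 < m := div_pos (mul_pos hβ (by linarith)) hξ
  have hbase : ∀ x : ℝ, 0 ≤ x → (1:ℝ) ≤ 1 + ξ * x / β := by
    intro x hx
    have : 0 ≤ ξ * x / β := div_nonneg (mul_nonneg hξ.le hx) hβ.le
    linarith
  have hξne : ξ ≠ 0 := ne_of_gt hξ
  have hmeq : 1 + ξ * m / β = (2:ℝ) ^ ξ := by rw [hm]; field_simp; ring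
  have hexp : -1 / ξ < 0 := div_neg_of_neg_of_pos (by norm_num) hξ
  have hhalf : ((2:ℝ) ^ ξ) ^ (-1 / ξ) = 1 / 2 := by
    rw [← Real.rpow_mul (by norm_num : (0:ℝ) ≤ 2)]
    have : ξ * (-1 / ξ) = -1 := by field_simp
    rw [this, Real.rpow_neg_one]
    norm_num
  set h : ℝ → ℝ := fun M => (1 + ξ * (m - M) / β) ^ (-1/ξ) - (1 + ξ * (m + k * M) / β) ^ (-1/ξ)
    with hh
  -- g = h on [0,m]
  have hgh : ∀ M ∈ Set.Icc (0:ℝ) m,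
      gpdCDF ξ β (m + k * M) - gpdCDF ξ β (m - M) = h M := by
    intro M hM
    obtain ⟨h0, h1⟩ := hM
    have ha : ¬ (m + k * M < 0) := by nlinarith
    have hb : ¬ (m - M < 0) := by linarith
    simp only [gpdCDF, ha, hb, if_false, hh]
    ring
  -- strict monotonicity of h on [0,m]
  have hmono : StrictMonoOn h (Set.Icc (0:ℝ) m) := by
    intro a ha b hb hab
    have hA : (1 + ξ * (m - b) / β) ^ (-1/ξ) < (1 + ξ * (m - a) / β) ^ (-1/ξ) → True := fun _ => trivial
    have hba1 : (1:ℝ) ≤ 1 + ξ * (m - b) / β := hbase _ (by linarith [hb.2])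
    have h1lt : 1 + ξ * (m - b) / β < 1 + ξ * (m - a) / β := by
      have : ξ * (m - b) / β < ξ * (m - a) / β :=
        (div_lt_div_iff_of_pos_right hβ).2 (by nlinarith)
      linarith
    have h2lt : 1 + ξ * (m + k * a) / β < 1 + ξ * (m + k * b) / β := by
      have : ξ * (m + k * a) / β < ξ * (m + k * b) / β :=
        (div_lt_div_iff_of_pos_right hβ).2 (by nlinarith [mul_pos (mul_pos hξ hk) (sub_pos.2 hab)])
      linarith
    have t1 : (1 + ξ * (m - a) / β) ^ (-1/ξ) < (1 + ξ * (m - b) / β) ^ (-1/ξ) :=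
      Real.rpow_lt_rpow_of_neg (by linarith) h1lt hexp
    have t2 : (1 + ξ * (m + k * b) / β) ^ (-1/ξ) < (1 + ξ * (m + k * a) / β) ^ (-1/ξ) :=
      Real.rpow_lt_rpow_of_neg (by linarith [hbase (m + k * a) (by nlinarith [ha.1])]) h2lt hexp
    simp only [hh]
    linarith
  -- continuity on [0,m]
  have hcont : ContinuousOn h (Set.Icc (0:ℝ) m) := by
    apply ContinuousOn.sub
    · apply ContinuousOn.rpow_const
      · fun_prop
      · intro x hx
        left
        have := hbase (m - x) (by linarith [hx.2])
        linarith
    · apply ContinuousOn.rpow_const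
      · fun_prop
      · intro x hx
        left
        have := hbase (m + k * x) (by nlinarith [hx.1])
        linarith
  -- endpoint values
  have hzero : h 0 = 0 := by simp [hh]
  have hend : 1 / 2 < h m := by
    have e1 : 1 + ξ * (m - m) / β = 1 := by ring
    have hlt : (2:ℝ) ^ ξ < 1 + ξ * (m + k * m) / β := by
      rw [← hmeq]
      have : ξ * m / β < ξ * (m + k * m) / β :=
        (div_lt_div_iff_of_pos_right hβ).2 (by nlinarith [mul_pos (mul_pos hξ hk) hmpos])
      linarith
    have t2 : (1 + ξ * (m + k * m) / β) ^ (-1/ξ) < ((2:ℝ) ^ ξ) ^ (-1/ξ) :=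
      Real.rpow_lt_rpow_of_neg (by linarith) hlt hexp
    rw [hhalf] at t2
    simp only [hh, e1, Real.one_rpow]
    linarith
  -- existence of root in (0, m)
  have hivt : (1:ℝ)/2 ∈ h '' Set.Ioo 0 m := by
    apply intermediate_value_Ioo hmpos.le hcont
    rw [hzero]
    constructor <;> [norm_num; exact hend]
  obtain ⟨c, hc, hc2⟩ := hivt
  refine ⟨c, ⟨hc.1, ?_⟩, ?_⟩
  · rw [hgh c ⟨hc.1.le, hc.2.le⟩, hc2]
  · rintro M ⟨hM0, hMeq⟩
    -- M must be ≤ m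
    by_cases hMm : M ≤ m
    · have := hgh M ⟨hM0.le, hMm⟩
      rw [this] at hMeq
      exact hmono.injOn ⟨hM0.le, hMm⟩ ⟨hc.1.le, hc.2.le⟩ (by rw [hMeq, hc2])
    · exfalso
      push_neg at hMm
      -- for M > m, g M = F(m + kM) > 1/2
      have ha : ¬ (m + k * M < 0) := by nlinarith
      have hb : m - M < 0 := by linarith
      have hlt : (2:ℝ) ^ ξ < 1 + ξ * (m + k * M) / β := by
        rw [← hmeq]
        have : ξ * m / β < ξ * (m + k * M) / β :=
          (div_lt_div_iff_of_pos_right hβ).2 (by nlinarith [mul_pos (mul_pos hξ hk) hM0])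
        linarith
      have t2 : (1 + ξ * (m + k * M) / β) ^ (-1/ξ) < ((2:ℝ) ^ ξ) ^ (-1/ξ) :=
        Real.rpow_lt_rpow_of_neg (by linarith) hlt hexp
      rw [hhalf] at t2
      simp only [gpdCDF, ha, hb, if_false, if_true] at hMeq
      -- hMeq : 1 - (...) - 0 = 1/2
      rw [show (-1:ℝ)/ξ = -1/ξ from rfl] at t2
      linarith [hMeq]
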